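/- Let 1 ≤ p < ∞ and 0 < δ < 1, and let μ be a σ-finite positive Borel measure on (0,∞) with ∫_0^∞ t^{2/p − 1} dμ(t) < ∞. Then for every f ∈ A^p(𝕌), ||H_μ(f) − H_μ^δ(f)||_{A^p(𝕌)} ≤ (∫_{(0,δ) ∪ (1/δ, ∞)} t^{2/p − 1} dμ(t)) · ||f||_{A^p(𝕌)}. -/

import Mathlib

open MeasureTheory Complex Set Filter
open scoped ENNReal NNReal Topology Real

noncomputable section

/-- The upper half plane `{z : ℂ | Im z > 0}`. -/
def UHP : Set ℂ := {z : ℂ | 0 < z.im}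

/-- The `p`-th power of the Bergman `A^p(UHP)` norm: `(1/π) ∫_UHP |f|^p dA`. -/
def apNormPow (p : ℝ) (f : ℂ → ℂ) : ℝ≥0∞ :=
  ENNReal.ofReal (1 / Real.pi) * ∫⁻ z in UHP, (‖f z‖₊ : ℝ≥0∞) ^ p

/-- The Bergman `A^p(UHP)` norm: `((1/π) ∫_UHP |f|^p dA)^(1/p)`. -/
def apNorm (p : ℝ) (f : ℂ → ℂ) : ℝ≥0∞ := apNormPow p f ^ (1 / p)

/-- Membership in the Bergman space `A^p(UHP)`: holomorphic on `UHP` with finite norm. -/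
def MemAp (p : ℝ) (f : ℂ → ℂ) : Prop :=
  DifferentiableOn ℂ f UHP ∧ apNormPow p f < ⊤

/-- The Hausdorff operator `H_μ f z = ∫_0^∞ (1/t) f(z/t) dμ(t)`. -/
def hausdorffOp (μ : Measure ℝ) (f : ℂ → ℂ) (z : ℂ) : ℂ :=
  ∫ t in Ioi (0:ℝ), (t : ℂ)⁻¹ * f (z / (t : ℂ)) ∂μ

/-- The truncated Hausdorff operator `H_μ^δ f z = ∫_{[δ,1/δ]} (1/t) f(z/t) dμ(t)`. -/
def hausdorffTrunc (μ : Measure ℝ) (δ : ℝ) (f : ℂ → ℂ) (z : ℂ) : ℂ :=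
  ∫ t in Icc δ (1/δ), (t : ℂ)⁻¹ * f (z / (t : ℂ)) ∂μ

lemma isOpen_UHP : IsOpen UHP := isOpen_lt continuous_const Complex.continuous_im

lemma measurableSet_UHP : MeasurableSet UHP := isOpen_UHP.measurableSet

lemma div_mem_UHP {z : ℂ} {t : ℝ} (ht : 0 < t) (hz : z ∈ UHP) : z / (t:ℂ) ∈ UHP := by
  simp only [UHP, mem_setOf_eq, div_eq_mul_inv] at *
  rw [← Complex.ofReal_inv, Complex.mul_im]
  simp only [Complex.ofReal_re, Complex.ofReal_im, mul_zero, zero_add, zero_mul, add_zero]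
  positivity

lemma mem_UHP_iff_div {z : ℂ} {t : ℝ} (ht : 0 < t) : z / (t:ℂ) ∈ UHP ↔ z ∈ UHP := by
  constructor
  · intro h
    have := div_mem_UHP (t := t⁻¹) (by positivity) h
    have ht' : (t:ℂ) ≠ 0 := by exact_mod_cast ht.ne'
    simpa [Complex.ofReal_inv, div_inv_eq_mul, div_mul_cancel₀, ht'] using this
  · exact div_mem_UHP ht

/-- scaling change of variables on all of ℂ -/
lemma lintegral_div_comp {F : ℂ → ℝ≥0∞} (hF : AEMeasurable F (volume : Measure ℂ))
    {t : ℝ} (ht : 0 < t) :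
    ∫⁻ z, F (z / (t:ℂ)) = ENNReal.ofReal (t^2) * ∫⁻ z, F z := by
  have h1 : (fun z : ℂ => F (z / (t:ℂ))) = fun z : ℂ => F ((t⁻¹ : ℝ) • z) := by
    funext z
    rw [Complex.real_smul, Complex.ofReal_inv, div_eq_mul_inv, mul_comm]
  rw [h1]
  have hmap : Measure.map ((t⁻¹ : ℝ) • ·) (volume : Measure ℂ)
      = ENNReal.ofReal |((t⁻¹:ℝ) ^ Module.finrank ℝ ℂ)⁻¹| • volume :=
    Measure.map_addHaar_smul volume (by positivity)
  have hFm : AEMeasurable F (Measure.map ((t⁻¹ : ℝ) • ·) (volume : Measure ℂ)) := by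
    rw [hmap]; exact hF.smul_measure _
  have := (lintegral_map' hFm (measurable_const_smul (t⁻¹ : ℝ)).aemeasurable).symm
  rw [this, hmap, lintegral_smul_measure]
  congr 1
  rw [Complex.finrank_real_complex]
  have h2 : ((t⁻¹:ℝ)^2)⁻¹ = t^2 := by field_simp
  rw [h2, _root_.abs_of_nonneg (by positivity : (0:ℝ) ≤ t^2)]

/-- Hölder step for the Hausdorff operator. -/
lemma holder_step {p : ℝ} (hp : 1 ≤ p) (ν : Measure ℝ) {W G : ℝ → ℝ≥0∞}
    (hW : AEMeasurable W ν) (hG : AEMeasurable G ν)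
    (hW0 : ∀ᵐ t ∂ν, W t ≠ 0 ∧ W t ≠ ⊤) :
    (∫⁻ t, G t ∂ν) ^ p ≤ (∫⁻ t, W t ∂ν) ^ (p - 1) * ∫⁻ t, W t ^ (1 - p) * G t ^ p ∂ν := by
  rcases eq_or_lt_of_le hp with hp1 | hp1
  · subst hp1
    simp [ENNReal.rpow_one]
  · set q : ℝ := Real.conjExponent p with hq
    have hpq : p.HolderConjugate q := Real.HolderConjugate.conjExponent hp1
    have hq0 : q ≠ 0 := hpq.symm.ne_zero
    set A : ℝ → ℝ≥0∞ := fun t => W t ^ (1 / q) with hA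
    set B : ℝ → ℝ≥0∞ := fun t => W t ^ ((1 - p) / p) * G t with hB
    have hAB : ∀ᵐ t ∂ν, A t * B t = G t := by
      filter_upwards [hW0] with t ⟨h0, htop⟩
      rw [hA, hB, ← mul_assoc, ← ENNReal.rpow_add _ _ h0 htop]
      have hpne : (p:ℝ) ≠ 0 := by linarith
      have h2 : q⁻¹ = 1 - p⁻¹ := by linarith [hpq.inv_add_inv_eq_one]
      have h3 : (1 - p) / p = p⁻¹ - 1 := by field_simp
      have h4 : 1 / q + (1 - p) / p = 0 := by rw [one_div, h2, h3]; ring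
      rw [h4, ENNReal.rpow_zero, one_mul]
    have hAm : AEMeasurable A ν := hW.pow_const _
    have hBm : AEMeasurable B ν := (hW.pow_const _).mul hG
    have hHolder := ENNReal.lintegral_mul_le_Lp_mul_Lq ν hpq.symm hAm hBm
    have hGle : ∫⁻ t, G t ∂ν ≤ (∫⁻ t, A t ^ q ∂ν) ^ (1 / q) * (∫⁻ t, B t ^ p ∂ν) ^ (1 / p) := by
      refine le_trans (le_of_eq ?_) hHolder
      exact (lintegral_congr_ae hAB).symm
    have hAq : ∫⁻ t, A t ^ q ∂ν = ∫⁻ t, W t ∂ν := by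
      refine lintegral_congr_ae (ae_of_all _ fun t => ?_)
      simp only []
      rw [← ENNReal.rpow_mul, one_div, inv_mul_cancel₀ hq0, ENNReal.rpow_one]
    have hBp : ∫⁻ t, B t ^ p ∂ν = ∫⁻ t, W t ^ (1 - p) * G t ^ p ∂ν := by
      refine lintegral_congr_ae (ae_of_all _ fun t => ?_)
      simp only []
      rw [ENNReal.mul_rpow_of_nonneg _ _ (by linarith : (0:ℝ) ≤ p), ← ENNReal.rpow_mul,
        div_mul_cancel₀ _ (by linarith : p ≠ 0)]
    rw [hAq, hBp] at hGle
    calc (∫⁻ t, G t ∂ν) ^ p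
        ≤ ((∫⁻ t, W t ∂ν) ^ (1 / q) * (∫⁻ t, W t ^ (1 - p) * G t ^ p ∂ν) ^ (1 / p)) ^ p :=
          ENNReal.rpow_le_rpow hGle (by linarith)
      _ = (∫⁻ t, W t ∂ν) ^ (p - 1) * ∫⁻ t, W t ^ (1 - p) * G t ^ p ∂ν := by
          rw [ENNReal.mul_rpow_of_nonneg _ _ (by linarith : (0:ℝ) ≤ p), ← ENNReal.rpow_mul,
            ← ENNReal.rpow_mul, one_div_mul_eq_div _ p, one_div_mul_cancel (by linarith : p ≠ 0),
            ENNReal.rpow_one]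
          congr 2
          exact hpq.div_conj_eq_sub_one

/-- Pointwise bound on the difference of Hausdorff operators. -/
lemma diff_bound {f : ℂ → ℂ} (fc : ContinuousOn f UHP) {δ : ℝ} (hδ0 : 0 < δ) (hδ1 : δ < 1)
    (μ : Measure ℝ) {z : ℂ} (hz : z ∈ UHP) :
    (‖hausdorffOp μ f z - hausdorffTrunc μ δ f z‖₊ : ℝ≥0∞) ≤
      ∫⁻ t in Ioo 0 δ ∪ Ioi (1/δ), (‖(t:ℂ)⁻¹ * f (z / (t:ℂ))‖₊ : ℝ≥0∞) ∂μ := by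
  set S : Set ℝ := Ioo 0 δ ∪ Ioi (1/δ) with hSdef
  set g : ℝ → ℂ := fun t => (t:ℂ)⁻¹ * f (z / (t:ℂ)) with hgdef
  have hS : MeasurableSet S := measurableSet_Ioo.union measurableSet_Ioi
  have hδinv : (0:ℝ) < 1/δ := by positivity
  have hSsub : S ⊆ Ioi 0 := by
    rintro t (⟨h1, _⟩ | h)
    · exact h1
    · exact lt_trans hδinv h
  have hIccsub : Icc δ (1/δ) ⊆ Ioi 0 := fun t ⟨h1, _⟩ => lt_of_lt_of_le hδ0 h1
  have hunion : S ∪ Icc δ (1/δ) = Ioi 0 := by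
    ext t
    simp only [hSdef, mem_union, mem_Ioo, mem_Icc, mem_Ioi]
    constructor
    · rintro ((⟨h1, _⟩ | h) | ⟨h1, _⟩)
      · exact h1
      · exact lt_trans hδinv h
      · exact lt_of_lt_of_le hδ0 h1
    · intro ht
      rcases lt_or_ge t δ with h | h
      · exact Or.inl (Or.inl ⟨ht, h⟩)
      · rcases le_or_gt t (1/δ) with h2 | h2
        · exact Or.inr ⟨h, h2⟩
        · exact Or.inl (Or.inr h2)
  have hdisj : Disjoint S (Icc δ (1/δ)) := by
    rw [hSdef, Set.disjoint_union_left]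
    constructor
    · exact Set.disjoint_left.mpr fun t ⟨_, h2⟩ ⟨h3, _⟩ => absurd h2 (not_lt.mpr h3)
    · exact Set.disjoint_left.mpr fun t h ⟨_, h4⟩ => absurd h (not_lt.mpr h4)
  have hgc : ContinuousOn g (Ioi 0) := by
    intro t ht
    have ht0 : (0:ℝ) < t := ht
    have htne : (t:ℂ) ≠ 0 := by exact_mod_cast ht0.ne'
    apply ContinuousWithinAt.mul
    · exact (Complex.continuous_ofReal.continuousAt.inv₀ htne).continuousWithinAt
    · have h1 : ContinuousAt (fun t : ℝ => z / (t:ℂ)) t :=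
        continuousAt_const.div Complex.continuous_ofReal.continuousAt htne
      have h2 : ContinuousAt f (z / (t:ℂ)) :=
        fc.continuousAt (isOpen_UHP.mem_nhds (div_mem_UHP ht0 hz))
      have h3 : ContinuousAt (fun t : ℝ => f (z / (t:ℂ))) t := Filter.Tendsto.comp h2 h1
      exact h3.continuousWithinAt
  by_cases htop : (∫⁻ t in S, (‖g t‖₊ : ℝ≥0∞) ∂μ) = ⊤
  · rw [htop]; exact le_top
  have hIntS : IntegrableOn g S μ :=
    ⟨(hgc.mono hSsub).aestronglyMeasurable hS, lt_top_iff_ne_top.mpr htop⟩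
  by_cases hicc : IntegrableOn g (Icc δ (1/δ)) μ
  · have hsplit : ∫ t in Ioi (0:ℝ), g t ∂μ = (∫ t in S, g t ∂μ) + ∫ t in Icc δ (1/δ), g t ∂μ := by
      rw [← hunion]
      exact setIntegral_union hdisj measurableSet_Icc hIntS hicc
    have hdiff : hausdorffOp μ f z - hausdorffTrunc μ δ f z = ∫ t in S, g t ∂μ := by
      rw [hausdorffOp, hausdorffTrunc]
      rw [show (∫ t in Ioi (0:ℝ), (t:ℂ)⁻¹ * f (z / (t:ℂ)) ∂μ) = ∫ t in Ioi (0:ℝ), g t ∂μ from rfl,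
        show (∫ t in Icc δ (1/δ), (t:ℂ)⁻¹ * f (z / (t:ℂ)) ∂μ) = ∫ t in Icc δ (1/δ), g t ∂μ from rfl,
        hsplit]
      ring
    rw [hdiff]
    exact enorm_integral_le_lintegral_enorm _
  · have h1 : hausdorffTrunc μ δ f z = 0 := integral_undef hicc
    have h2 : hausdorffOp μ f z = 0 := by
      apply integral_undef
      intro h
      have h' : IntegrableOn g (Ioi 0) μ := h
      exact hicc (h'.mono_set hIccsub)
    rw [hausdorffOp] at h2
    rw [hausdorffTrunc] at h1
    rw [hausdorffOp, hausdorffTrunc, h1, h2, sub_zero]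
    simp

/-- Scaling identity for the Bergman integral. -/
lemma setLIntegral_scale {f : ℂ → ℂ} (fc : ContinuousOn f UHP) (p : ℝ) {t : ℝ} (ht : 0 < t) :
    ∫⁻ z in UHP, (‖f (z / (t:ℂ))‖₊ : ℝ≥0∞) ^ p
      = ENNReal.ofReal (t^2) * ∫⁻ z in UHP, (‖f z‖₊ : ℝ≥0∞) ^ p := by
  set g : ℂ → ℝ≥0∞ := fun w => (‖f w‖₊ : ℝ≥0∞) ^ p with hgdef
  set F : ℂ → ℝ≥0∞ := UHP.indicator g with hFdef
  have hfm : AEMeasurable f (volume.restrict UHP) := fc.aemeasurable measurableSet_UHP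
  have hgA : AEMeasurable g (volume.restrict UHP) := hfm.enorm.pow_const p
  have hFA : AEMeasurable F (volume : Measure ℂ) :=
    (aemeasurable_indicator_iff measurableSet_UHP).mpr hgA
  have hid : UHP.indicator (fun z => F (z / (t:ℂ))) = fun z => F (z / (t:ℂ)) := by
    funext z
    by_cases hz : z ∈ UHP
    · rw [indicator_of_mem hz]
    · rw [indicator_of_notMem hz, hFdef,
        indicator_of_notMem (fun h => hz ((mem_UHP_iff_div ht).mp h))]
  calc ∫⁻ z in UHP, g (z / (t:ℂ))
      = ∫⁻ z in UHP, F (z / (t:ℂ)) := by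
        refine setLIntegral_congr_fun measurableSet_UHP (fun z hz => ?_)
        rw [hFdef, indicator_of_mem (div_mem_UHP ht hz)]
    _ = ∫⁻ z, F (z / (t:ℂ)) := by
        rw [← lintegral_indicator measurableSet_UHP, hid]
    _ = ENNReal.ofReal (t^2) * ∫⁻ z, F z := lintegral_div_comp hFA ht
    _ = ENNReal.ofReal (t^2) * ∫⁻ z in UHP, g z := by
        rw [hFdef, lintegral_indicator measurableSet_UHP]

/-- Inner integral formula with the weight. -/
lemma inner_scale {f : ℂ → ℂ} (fc : ContinuousOn f UHP) {p : ℝ} (hp : 1 ≤ p) {t : ℝ}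
    (ht : 0 < t) :
    ∫⁻ z in UHP, (‖(t:ℂ)⁻¹ * f (z / (t:ℂ))‖₊ : ℝ≥0∞) ^ p
      = ENNReal.ofReal (t ^ (2 - p)) * ∫⁻ z in UHP, (‖f z‖₊ : ℝ≥0∞) ^ p := by
  have hc : ((‖(t:ℂ)⁻¹‖₊ : ℝ≥0∞)) = ENNReal.ofReal t⁻¹ := by
    rw [← enorm_eq_nnnorm, ← ofReal_norm, norm_inv, Complex.norm_real, Real.norm_eq_abs, abs_of_pos ht]
  have hsplit : ∀ z : ℂ, (‖(t:ℂ)⁻¹ * f (z / (t:ℂ))‖₊ : ℝ≥0∞) ^ p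
      = ENNReal.ofReal t⁻¹ ^ p * (‖f (z / (t:ℂ))‖₊ : ℝ≥0∞) ^ p := by
    intro z
    rw [nnnorm_mul, ENNReal.coe_mul, ENNReal.mul_rpow_of_nonneg _ _ (by linarith : (0:ℝ) ≤ p), hc]
  simp_rw [hsplit]
  rw [lintegral_const_mul' _ _ (ENNReal.rpow_ne_top_of_nonneg (by linarith) ENNReal.ofReal_ne_top),
    setLIntegral_scale fc p ht, ← mul_assoc]
  congr 1
  rw [ENNReal.ofReal_rpow_of_pos (inv_pos.mpr ht), ← ENNReal.ofReal_mul (by positivity)]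
  congr 1
  rw [← Real.rpow_neg_one t, ← Real.rpow_natCast t 2, ← Real.rpow_mul ht.le,
    ← Real.rpow_add ht]
  ring_nf

lemma g_contOn {f : ℂ → ℂ} (fc : ContinuousOn f UHP) {z : ℂ} (hz : z ∈ UHP) :
    ContinuousOn (fun t : ℝ => (t:ℂ)⁻¹ * f (z / (t:ℂ))) (Ioi 0) := by
  intro t ht
  have ht0 : (0:ℝ) < t := ht
  have htne : (t:ℂ) ≠ 0 := by exact_mod_cast ht0.ne'
  apply ContinuousWithinAt.mul
  · exact (Complex.continuous_ofReal.continuousAt.inv₀ htne).continuousWithinAt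
  · have h1 : ContinuousAt (fun t : ℝ => z / (t:ℂ)) t :=
      continuousAt_const.div Complex.continuous_ofReal.continuousAt htne
    have h2 : ContinuousAt f (z / (t:ℂ)) :=
      fc.continuousAt (isOpen_UHP.mem_nhds (div_mem_UHP ht0 hz))
    have h3 : ContinuousAt (fun t : ℝ => f (z / (t:ℂ))) t := Filter.Tendsto.comp h2 h1
    exact h3.continuousWithinAt

lemma joint_aemeas {f : ℂ → ℂ} (fc : ContinuousOn f UHP) (μ : Measure ℝ) [SFinite μ] {S : Set ℝ}
    (hS : MeasurableSet S) (hSsub : S ⊆ Ioi 0) :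
    AEMeasurable (Function.uncurry fun (z : ℂ) (t : ℝ) => (‖(t:ℂ)⁻¹ * f (z / (t:ℂ))‖₊ : ℝ≥0∞))
      ((volume.restrict UHP).prod (μ.restrict S)) := by
  rw [Measure.prod_restrict]
  have hcont : ContinuousOn (fun q : ℂ × ℝ => ((q.2:ℝ):ℂ)⁻¹ * f (q.1 / ((q.2:ℝ):ℂ)))
      (UHP ×ˢ S) := by
    rintro ⟨z, t⟩ ⟨hz, ht⟩
    have ht0 : (0:ℝ) < t := hSsub ht
    have htne : ((t:ℝ):ℂ) ≠ 0 := by exact_mod_cast ht0.ne'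
    apply ContinuousWithinAt.mul
    · have hc1 : ContinuousAt (fun q : ℂ × ℝ => ((q.2:ℝ):ℂ)) (z, t) :=
        (Complex.continuous_ofReal.comp continuous_snd).continuousAt
      exact (hc1.inv₀ htne).continuousWithinAt
    · have h1 : ContinuousAt (fun q : ℂ × ℝ => q.1 / ((q.2:ℝ):ℂ)) (z, t) :=
        continuous_fst.continuousAt.div
          (Complex.continuous_ofReal.comp continuous_snd).continuousAt htne
      have h2 : ContinuousAt f (z / ((t:ℝ):ℂ)) :=
        fc.continuousAt (isOpen_UHP.mem_nhds (div_mem_UHP ht0 hz))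
      have h3 : ContinuousAt (fun q : ℂ × ℝ => f (q.1 / ((q.2:ℝ):ℂ))) (z, t) :=
        Filter.Tendsto.comp h2 h1
      exact h3.continuousWithinAt
  have hA : AEMeasurable (fun q : ℂ × ℝ => ((q.2:ℝ):ℂ)⁻¹ * f (q.1 / ((q.2:ℝ):ℂ)))
      ((volume.prod μ).restrict (UHP ×ˢ S)) :=
    hcont.aemeasurable (measurableSet_UHP.prod hS)
  exact hA.enorm

theorem stmt13 (p δ : ℝ) (hp : 1 ≤ p) (hδ0 : 0 < δ) (hδ1 : δ < 1)
    (μ : Measure ℝ) [SigmaFinite μ]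
    (hμ : ∫⁻ t in Ioi (0:ℝ), ENNReal.ofReal (t ^ (2 / p - 1)) ∂μ < ⊤) :
    ∀ f : ℂ → ℂ, MemAp p f →
      apNorm p (fun z => hausdorffOp μ f z - hausdorffTrunc μ δ f z) ≤
        (∫⁻ t in Ioo 0 δ ∪ Ioi (1/δ), ENNReal.ofReal (t ^ (2 / p - 1)) ∂μ) *
          apNorm p f := by
  intro f hf
  obtain ⟨hdiff, hfin⟩ := hf
  have fc : ContinuousOn f UHP := hdiff.continuousOn
  have hp0 : (0:ℝ) < p := by linarith
  have hp0' : (0:ℝ) ≤ p := hp0.le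
  have hpne : p ≠ 0 := hp0.ne'
  set S : Set ℝ := Ioo 0 δ ∪ Ioi (1/δ) with hSdef
  have hS : MeasurableSet S := measurableSet_Ioo.union measurableSet_Ioi
  have hδinv : (0:ℝ) < 1/δ := by positivity
  have hSsub : S ⊆ Ioi 0 := by
    rintro t (⟨h1, _⟩ | h)
    · exact h1
    · exact lt_trans hδinv h
  set W : ℝ → ℝ≥0∞ := fun t => ENNReal.ofReal (t ^ (2 / p - 1)) with hWdef
  set G : ℝ → ℂ → ℝ≥0∞ := fun t z => (‖(t:ℂ)⁻¹ * f (z / (t:ℂ))‖₊ : ℝ≥0∞) with hGdef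
  set N : ℝ≥0∞ := ∫⁻ z in UHP, (‖f z‖₊ : ℝ≥0∞) ^ p with hNdef
  set I : ℝ≥0∞ := ∫⁻ t in S, W t ∂μ with hIdef
  have hI_top : I ≠ ⊤ := (lt_of_le_of_lt (lintegral_mono_set hSsub) hμ).ne
  have hN_top : N ≠ ⊤ := by
    intro h
    rw [apNormPow, ← hNdef, h, ENNReal.mul_top] at hfin
    · exact (lt_irrefl _) hfin
    · exact (ENNReal.ofReal_pos.mpr (by positivity)).ne'
  have hWmeas : Measurable W := (measurable_id.pow_const _).ennreal_ofReal
  -- Step B ingredients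
  have hW0 : ∀ᵐ t ∂(μ.restrict S), W t ≠ 0 ∧ W t ≠ ⊤ := by
    refine (ae_restrict_iff' hS).mpr (ae_of_all _ fun t ht => ?_)
    have ht0 : (0:ℝ) < t := hSsub ht
    exact ⟨(ENNReal.ofReal_pos.mpr (Real.rpow_pos_of_pos ht0 _)).ne', ENNReal.ofReal_ne_top⟩
  -- pointwise bound and Hölder
  have step1 : ∫⁻ z in UHP,
      (‖hausdorffOp μ f z - hausdorffTrunc μ δ f z‖₊ : ℝ≥0∞) ^ p
      ≤ ∫⁻ z in UHP, I ^ (p - 1) * ∫⁻ t in S, W t ^ (1 - p) * G t z ^ p ∂μ := by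
    refine lintegral_mono_ae ((ae_restrict_iff' measurableSet_UHP).mpr
      (ae_of_all _ fun z hz => ?_))
    have hb := diff_bound fc hδ0 hδ1 μ hz
    have hGm : AEMeasurable (fun t => G t z) (μ.restrict S) :=
      (((g_contOn fc hz).mono hSsub).aemeasurable hS).enorm
    calc (‖hausdorffOp μ f z - hausdorffTrunc μ δ f z‖₊ : ℝ≥0∞) ^ p
        ≤ (∫⁻ t in S, G t z ∂μ) ^ p := ENNReal.rpow_le_rpow hb hp0'
      _ ≤ I ^ (p - 1) * ∫⁻ t in S, W t ^ (1 - p) * G t z ^ p ∂μ :=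
          holder_step hp (μ.restrict S) hWmeas.aemeasurable hGm hW0
  -- pull out the constant
  have step2 : ∫⁻ z in UHP, I ^ (p - 1) * ∫⁻ t in S, W t ^ (1 - p) * G t z ^ p ∂μ
      = I ^ (p - 1) * ∫⁻ z in UHP, ∫⁻ t in S, W t ^ (1 - p) * G t z ^ p ∂μ :=
    lintegral_const_mul' _ _ (ENNReal.rpow_ne_top_of_nonneg (by linarith) hI_top)
  -- Tonelli
  have step3 : ∫⁻ z in UHP, ∫⁻ t in S, W t ^ (1 - p) * G t z ^ p ∂μ
      = ∫⁻ t in S, (∫⁻ z in UHP, W t ^ (1 - p) * G t z ^ p) ∂μ := by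
    have hjoint : AEMeasurable
        (Function.uncurry fun (z : ℂ) (t : ℝ) => W t ^ (1 - p) * G t z ^ p)
        ((volume.restrict UHP).prod (μ.restrict S)) := by
      have h1 : Measurable fun q : ℂ × ℝ => W q.2 ^ (1 - p) :=
        (hWmeas.comp measurable_snd).pow_const _
      have h2 : AEMeasurable
          (fun q : ℂ × ℝ => ((‖((q.2:ℝ):ℂ)⁻¹ * f (q.1 / ((q.2:ℝ):ℂ))‖₊ : ℝ≥0∞)) ^ p)
          ((volume.restrict UHP).prod (μ.restrict S)) :=
        (joint_aemeas fc μ hS hSsub).pow_const p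
      exact h1.aemeasurable.mul h2
    exact lintegral_lintegral_swap hjoint
  -- inner integral
  have step4 : ∫⁻ t in S, (∫⁻ z in UHP, W t ^ (1 - p) * G t z ^ p) ∂μ
      = ∫⁻ t in S, W t * N ∂μ := by
    refine lintegral_congr_ae ((ae_restrict_iff' hS).mpr (ae_of_all _ fun t ht => ?_))
    have ht0 : (0:ℝ) < t := hSsub ht
    have hWne : W t ≠ 0 := (ENNReal.ofReal_pos.mpr (Real.rpow_pos_of_pos ht0 _)).ne'
    have hWnt : W t ^ (1 - p) ≠ ⊤ := by
      intro h
      rcases ENNReal.rpow_eq_top_iff.mp h with ⟨h0, _⟩ | ⟨h0, _⟩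
      · exact hWne h0
      · exact ENNReal.ofReal_ne_top h0
    simp only []
    rw [lintegral_const_mul' _ _ hWnt, hGdef]
    simp only []
    rw [inner_scale fc hp ht0, ← mul_assoc]
    congr 1
    rw [hWdef]
    simp only []
    rw [ENNReal.ofReal_rpow_of_pos (Real.rpow_pos_of_pos ht0 _), ← Real.rpow_mul ht0.le,
      ← ENNReal.ofReal_mul (Real.rpow_nonneg ht0.le _), ← Real.rpow_add ht0]
    congr 1
    field_simp
    ring
  have step5 : ∫⁻ t in S, W t * N ∂μ = I * N := by
    rw [lintegral_mul_const' _ _ hN_top]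
  -- combine
  have hIpow : I ^ (p - 1) * I = I ^ p := by
    by_cases hI0 : I = 0
    · simp [hI0, ENNReal.zero_rpow_of_pos hp0]
    · nth_rewrite 2 [← ENNReal.rpow_one I]
      rw [← ENNReal.rpow_add _ _ hI0 hI_top]
      norm_num
  have main : apNormPow p (fun z => hausdorffOp μ f z - hausdorffTrunc μ δ f z)
      ≤ I ^ p * apNormPow p f := by
    rw [apNormPow, apNormPow, ← hNdef]
    calc ENNReal.ofReal (1 / Real.pi) * ∫⁻ z in UHP,
          (‖hausdorffOp μ f z - hausdorffTrunc μ δ f z‖₊ : ℝ≥0∞) ^ p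
        ≤ ENNReal.ofReal (1 / Real.pi) * (I ^ (p - 1) * (I * N)) := by
          refine mul_le_mul_right ?_ _
          rw [← step5, ← step4, ← step3, ← step2]
          exact step1
      _ = I ^ p * (ENNReal.ofReal (1 / Real.pi) * N) := by
          rw [← mul_assoc (I ^ (p-1)) I N, hIpow]; ring
  calc apNorm p (fun z => hausdorffOp μ f z - hausdorffTrunc μ δ f z)
      = apNormPow p (fun z => hausdorffOp μ f z - hausdorffTrunc μ δ f z) ^ (1/p) := rfl
    _ ≤ (I ^ p * apNormPow p f) ^ (1/p) :=
        ENNReal.rpow_le_rpow main (by positivity)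
    _ = I * apNorm p f := by
        rw [ENNReal.mul_rpow_of_nonneg _ _ (by positivity : (0:ℝ) ≤ 1/p),
          ← ENNReal.rpow_mul, mul_one_div_cancel hpne, ENNReal.rpow_one, apNorm]
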